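/- For density matrices ρ and σ, the function ψ(s) = log Tr(ρ^s σ^{1-s}) is convex on the interval [0,1]. -/

import Mathlib

open Matrix
open scoped ComplexOrder

/-- Trace norm `‖X‖₁ = Tr √(XᴴX)`. -/
noncomputable def traceNorm {n : Type*} [Fintype n] [DecidableEq n] (X : Matrix n n ℂ) : ℝ :=
  (((Matrix.posSemidef_conjTranspose_mul_self X).1.cfc Real.sqrt).trace).re

/-- Fractional power `A^s` of a positive semidefinite matrix, defined spectrally with the
convention `0 ^ s = 0` for all real `s`. -/
noncomputable def Matrix.PosSemidef.rpow {n : Type*} [Fintype n] [DecidableEq n]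
    {A : Matrix n n ℂ} (hA : A.PosSemidef) (s : ℝ) : Matrix n n ℂ :=
  hA.1.cfc (fun x => if x = 0 then 0 else x ^ s)

/-- Matrix logarithm of a positive semidefinite matrix, defined spectrally with the
convention `log 0 = 0` on the kernel. -/
noncomputable def Matrix.PosSemidef.log {n : Type*} [Fintype n] [DecidableEq n]
    {A : Matrix n n ℂ} (hA : A.PosSemidef) : Matrix n n ℂ :=
  hA.1.cfc Real.log


private lemma trace_cfc_mul_cfc_re {n : Type*} [Fintype n] [DecidableEq n]
    {A B : Matrix n n ℂ} (hA : A.IsHermitian) (hB : B.IsHermitian) (f g : ℝ → ℝ) :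
    ((hA.cfc f * hB.cfc g).trace).re =
      ∑ i, ∑ j, f (hA.eigenvalues i) * g (hB.eigenvalues j) *
        Complex.normSq ((star (hA.eigenvectorUnitary : Matrix n n ℂ) *
          (hB.eigenvectorUnitary : Matrix n n ℂ)) i j) := by
  set U := (hA.eigenvectorUnitary : Matrix n n ℂ)
  set V := (hB.eigenvectorUnitary : Matrix n n ℂ)
  set W := star U * V with hW
  have h1 : (hA.cfc f * hB.cfc g).trace =
      (Matrix.diagonal (RCLike.ofReal ∘ f ∘ hA.eigenvalues) *
        (W * (Matrix.diagonal (RCLike.ofReal ∘ g ∘ hB.eigenvalues) * star W))).trace := by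
    rw [Matrix.IsHermitian.cfc, Matrix.IsHermitian.cfc, hW, Unitary.conjStarAlgAut_apply,
      Unitary.conjStarAlgAut_apply]
    simp only [StarMul.star_mul, star_star, Matrix.mul_assoc]
    rw [Matrix.trace_mul_comm]
    simp only [Matrix.mul_assoc]
    rfl
  have h2 : (Matrix.diagonal (RCLike.ofReal ∘ f ∘ hA.eigenvalues) *
      (W * (Matrix.diagonal (RCLike.ofReal ∘ g ∘ hB.eigenvalues) * star W))).trace
      = ∑ i, ∑ j, (((f (hA.eigenvalues i)) : ℂ) *
          (W i j * ((g (hB.eigenvalues j) : ℂ) * star (W i j)))) := by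
    simp [Matrix.trace, Matrix.mul_apply, Matrix.diagonal_apply, Matrix.star_apply,
      Finset.mul_sum, mul_comm, mul_left_comm]
  have hkey : ∀ (a b : ℝ) (z : ℂ), ((a : ℂ) * (z * ((b : ℂ) * star z)))
      = ((a * b * Complex.normSq z : ℝ) : ℂ) := by
    intro a b z
    rw [Complex.star_def,
      show z * ((b:ℂ) * (starRingEnd ℂ) z) = (b:ℂ) * (z * (starRingEnd ℂ) z) by ring,
      Complex.mul_conj]
    push_cast
    ring
  rw [h1, h2]
  simp only [hkey]
  rw [Complex.re_sum]
  simp [Complex.re_sum]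

private lemma convexOn_log_sum_exp {ι : Type*} [Fintype ι] (w u : ι → ℝ) (hw : ∀ i, 0 ≤ w i) :
    ConvexOn ℝ Set.univ (fun x => Real.log (∑ i, w i * Real.exp (u i * x))) := by
  by_cases hz : ∀ i, w i = 0
  · simp only [hz, zero_mul, Finset.sum_const_zero, Real.log_zero]
    exact convexOn_const 0 convex_univ
  push_neg at hz
  obtain ⟨i₀, hi₀⟩ := hz
  have hpos : ∀ x : ℝ, 0 < ∑ i, w i * Real.exp (u i * x) := by
    intro x
    refine Finset.sum_pos' (fun i _ => mul_nonneg (hw i) (Real.exp_pos _).le)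
      ⟨i₀, Finset.mem_univ _, mul_pos ((hw i₀).lt_of_ne (Ne.symm hi₀)) (Real.exp_pos _)⟩
  refine ⟨convex_univ, fun x _ y _ a b ha hb hab => ?_⟩
  rcases ha.eq_or_lt with rfl | ha'
  · simp only [zero_add] at hab; simp [hab]
  rcases hb.eq_or_lt with rfl | hb'
  · simp only [add_zero] at hab; simp [hab]
  have holder : ∑ i, w i * Real.exp (u i * (a * x + b * y)) ≤
      (∑ i, w i * Real.exp (u i * x)) ^ a * (∑ i, w i * Real.exp (u i * y)) ^ b := by
    have hconj : (1/a).HolderConjugate (1/b) := by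
      rw [Real.holderConjugate_iff]; constructor
      · rw [lt_div_iff₀ ha']; linarith
      · rw [one_div, one_div, inv_inv, inv_inv]; exact hab
    have H := Real.inner_le_Lp_mul_Lq_of_nonneg (s := Finset.univ) hconj
      (f := fun i => (w i * Real.exp (u i * x)) ^ a)
      (g := fun i => (w i * Real.exp (u i * y)) ^ b)
      (fun i _ => Real.rpow_nonneg (mul_nonneg (hw i) (Real.exp_pos _).le) _)
      (fun i _ => Real.rpow_nonneg (mul_nonneg (hw i) (Real.exp_pos _).le) _)
    have e1 : ∀ i : ι, (w i * Real.exp (u i * x)) ^ a * (w i * Real.exp (u i * y)) ^ b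
        = w i * Real.exp (u i * (a * x + b * y)) := by
      intro i
      rw [Real.mul_rpow (hw i) (Real.exp_pos _).le, Real.mul_rpow (hw i) (Real.exp_pos _).le,
        ← Real.exp_mul, ← Real.exp_mul]
      rw [show w i ^ a * Real.exp (u i * x * a) * (w i ^ b * Real.exp (u i * y * b))
          = (w i ^ a * w i ^ b) * (Real.exp (u i * x * a) * Real.exp (u i * y * b)) by ring,
        ← Real.rpow_add' (hw i) (by rw [hab]; norm_num), hab, Real.rpow_one, ← Real.exp_add]
      ring_nf
    have e2 : ∀ (z : ℝ) (c : ℝ), 0 < c → ∑ i, ((w i * Real.exp (u i * z)) ^ c) ^ (1/c)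
        = ∑ i, w i * Real.exp (u i * z) := by
      intro z c hc
      refine Finset.sum_congr rfl fun i _ => ?_
      rw [← Real.rpow_mul (mul_nonneg (hw i) (Real.exp_pos _).le),
        mul_one_div_cancel hc.ne', Real.rpow_one]
    simp only [e1] at H
    rwa [e2 x a ha', e2 y b hb', one_div_one_div, one_div_one_div] at H
  calc Real.log (∑ i, w i * Real.exp (u i * (a * x + b * y)))
      ≤ Real.log ((∑ i, w i * Real.exp (u i * x)) ^ a * (∑ i, w i * Real.exp (u i * y)) ^ b) :=
        Real.log_le_log (hpos _) holder
    _ = a * Real.log (∑ i, w i * Real.exp (u i * x))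
        + b * Real.log (∑ i, w i * Real.exp (u i * y)) := by
        rw [Real.log_mul (Real.rpow_pos_of_pos (hpos x) a).ne' (Real.rpow_pos_of_pos (hpos y) b).ne',
          Real.log_rpow (hpos x), Real.log_rpow (hpos y)]
  -- match smul

/-- For density matrices `ρ`, `σ`, the map `ψ(s) = log Tr(ρ^s σ^{1-s})` is convex on `[0,1]`. -/
theorem stmt7 {n : Type*} [Fintype n] [DecidableEq n]
    {ρ σ : Matrix n n ℂ} (hρ : ρ.PosSemidef) (hσ : σ.PosSemidef)
    (hρ1 : ρ.trace = 1) (hσ1 : σ.trace = 1) :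
    ConvexOn ℝ (Set.Icc (0:ℝ) 1)
      (fun s => Real.log (((hρ.rpow s * hσ.rpow (1 - s)).trace).re)) := by
  have gen : ∀ (s l m c : ℝ), 0 < l → 0 < m →
      l ^ s * m ^ (1-s) * c = c * m * Real.exp ((Real.log l - Real.log m) * s) := by
    intro s l m c hl hm
    rw [Real.rpow_def_of_pos hl, Real.rpow_def_of_pos hm,
      show Real.log m * (1 - s) = Real.log m - Real.log m * s by ring,
      show (Real.log l - Real.log m) * s = Real.log l * s - Real.log m * s by ring,
      Real.exp_sub, Real.exp_sub, Real.exp_log hm]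
    field_simp
  have hwnn : ∀ p : n × n,
      0 ≤ (if hρ.1.eigenvalues p.1 = 0 ∨ hσ.1.eigenvalues p.2 = 0 then (0:ℝ)
        else Complex.normSq ((star (hρ.1.eigenvectorUnitary : Matrix n n ℂ) *
          (hσ.1.eigenvectorUnitary : Matrix n n ℂ)) p.1 p.2) * hσ.1.eigenvalues p.2) := by
    intro p
    by_cases h : hρ.1.eigenvalues p.1 = 0 ∨ hσ.1.eigenvalues p.2 = 0
    · simp [h]
    · push_neg at h
      simp only [if_neg (not_or.mpr h)]
      exact mul_nonneg (Complex.normSq_nonneg _) (hσ.eigenvalues_nonneg p.2)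
  have main := (convexOn_log_sum_exp (ι := n × n)
    (fun p => if hρ.1.eigenvalues p.1 = 0 ∨ hσ.1.eigenvalues p.2 = 0 then (0:ℝ)
        else Complex.normSq ((star (hρ.1.eigenvectorUnitary : Matrix n n ℂ) *
          (hσ.1.eigenvectorUnitary : Matrix n n ℂ)) p.1 p.2) * hσ.1.eigenvalues p.2)
    (fun p => Real.log (hρ.1.eigenvalues p.1) - Real.log (hσ.1.eigenvalues p.2))
    hwnn).subset (Set.subset_univ _) (convex_Icc 0 1)
  have key : ∀ s : ℝ, ((hρ.rpow s * hσ.rpow (1 - s)).trace).re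
      = ∑ p : n × n, (if hρ.1.eigenvalues p.1 = 0 ∨ hσ.1.eigenvalues p.2 = 0 then (0:ℝ)
          else Complex.normSq ((star (hρ.1.eigenvectorUnitary : Matrix n n ℂ) *
            (hσ.1.eigenvectorUnitary : Matrix n n ℂ)) p.1 p.2) * hσ.1.eigenvalues p.2)
        * Real.exp ((Real.log (hρ.1.eigenvalues p.1) - Real.log (hσ.1.eigenvalues p.2)) * s) := by
    intro s
    rw [Matrix.PosSemidef.rpow, Matrix.PosSemidef.rpow, trace_cfc_mul_cfc_re,
      Fintype.sum_prod_type]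
    refine Finset.sum_congr rfl fun i _ => Finset.sum_congr rfl fun j _ => ?_
    by_cases h1 : hρ.1.eigenvalues i = 0
    · simp [h1]
    by_cases h2 : hσ.1.eigenvalues j = 0
    · simp [h2]
    have hl : 0 < hρ.1.eigenvalues i := (hρ.eigenvalues_nonneg i).lt_of_ne (Ne.symm h1)
    have hm : 0 < hσ.1.eigenvalues j := (hσ.eigenvalues_nonneg j).lt_of_ne (Ne.symm h2)
    simp only [if_neg h1, if_neg h2, if_neg (not_or.mpr ⟨h1, h2⟩)]
    exact gen s _ _ _ hl hm
  simp only [key]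
  exact main
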